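/- Let X be a Hausdorff space in which every countably infinite strongly discrete subset has a complete accumulation point (equivalently, an accumulation point), and let Y ⊆ X be a countably infinite fluffy subset such that every y ∈ Y has a countable decreasing sequence of open neighborhoods whose closures intersect in {y}. Then there is a strongly discrete subset D of X with |D| = |Y| and Y ⊆ closure(D). -/

import Mathlib

open Set

def StronglyDiscrete {X : Type*} [TopologicalSpace X] (D : Set X) : Prop :=
  ∃ U : X → Set X, (∀ d ∈ D, IsOpen (U d) ∧ d ∈ U d) ∧ D.PairwiseDisjoint U

def Fluffy {X : Type*} [TopologicalSpace X] (Y : Set X) : Prop :=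
  ∃ U : X → Set X, (∀ y ∈ Y, IsOpen (U y) ∧ (U y).Nonempty ∧ y ∈ closure (U y)) ∧
    Y.PairwiseDisjoint U

lemma lemA {X : Type*} [TopologicalSpace X] [T2Space X]
    (hacc : ∀ D : Set X, D.Countable → D.Infinite → StronglyDiscrete D →
      ∃ x, x ∈ closure (D \ {x}))
    {y : X} {U : Set X} (hUo : IsOpen U) (hyU : y ∈ closure U)
    {V : ℕ → Set X} (hV : ∀ n, IsOpen (V n) ∧ y ∈ V n)
    (hVd : ∀ n, V (n + 1) ⊆ V n) (hVi : ⋂ n, closure (V n) = {y}) :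
    ∃ E : Set X, E.Countable ∧ E.Nonempty ∧ y ∈ closure E ∧
      ∃ W : X → Set X, (∀ d ∈ E, IsOpen (W d) ∧ d ∈ W d ∧ W d ⊆ U) ∧
        E.PairwiseDisjoint W := by
  by_cases hyU' : y ∈ U
  · exact ⟨{y}, countable_singleton y, ⟨y, rfl⟩, subset_closure rfl,
      fun _ => U, fun d hd => ⟨hUo, hd ▸ hyU', subset_rfl⟩,
      Set.pairwiseDisjoint_singleton y (fun _ => U)⟩
  · -- V is antitone
    have hanti : Antitone V := antitone_nat_of_succ_le hVd
    have hcanti : Antitone (fun n => closure (V n)) :=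
      fun m n h => closure_mono (hanti h)
    have hne : ∀ n, ∃ x, x ∈ U ∧ x ∈ V n := by
      intro n
      have := mem_closure_iff.mp hyU (V n) (hV n).1 (hV n).2
      obtain ⟨x, hx1, hx2⟩ := this
      exact ⟨x, hx2, hx1⟩
    have hesc : ∀ x ∈ U, ∃ m, x ∉ closure (V m) := by
      intro x hx
      by_contra h
      push_neg at h
      have : x ∈ ⋂ n, closure (V n) := mem_iInter.mpr h
      rw [hVi] at this
      exact hyU' (this ▸ hx)
    have step : ∀ n : ℕ, ∃ p : ℕ × X,
        p.2 ∈ U ∧ p.2 ∈ V n ∧ n < p.1 ∧ p.2 ∉ closure (V p.1) := by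
      intro n
      obtain ⟨x, hxU, hxV⟩ := hne n
      obtain ⟨m, hm⟩ := hesc x hxU
      refine ⟨(max m (n + 1), x), hxU, hxV, lt_of_lt_of_le (Nat.lt_succ_self n) (le_max_right _ _), ?_⟩
      exact fun hc => hm (hcanti (le_max_left m (n + 1)) hc)
    choose p hpU hpV hplt hpc using step
    set nseq : ℕ → ℕ := fun k => Nat.rec 0 (fun _ prev => (p prev).1) k with hnseq
    have hnsucc : ∀ k, nseq (k + 1) = (p (nseq k)).1 := fun k => rfl
    set xseq : ℕ → X := fun k => (p (nseq k)).2 with hxseq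
    have hxU' : ∀ k, xseq k ∈ U := fun k => hpU (nseq k)
    have hxV' : ∀ k, xseq k ∈ V (nseq k) := fun k => hpV (nseq k)
    have hxc : ∀ k, xseq k ∉ closure (V (nseq (k + 1))) := by
      intro k
      rw [hnsucc]
      exact hpc (nseq k)
    have hmono : StrictMono nseq := by
      apply strictMono_nat_of_lt_succ
      intro k
      rw [hnsucc]
      exact hplt (nseq k)
    have hlek : ∀ k, k ≤ nseq k := fun k => hmono.le_apply
    have hinj : Function.Injective xseq := by
      have key : ∀ i j, i < j → xseq i ≠ xseq j := by
        intro i j hij heq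
        apply hxc i
        rw [heq]
        exact subset_closure (hanti (hmono.monotone hij) (hxV' j))
      intro i j heq
      rcases lt_trichotomy i j with h | h | h
      · exact absurd heq (key i j h)
      · exact h
      · exact absurd heq.symm (key j i h)
    set idx : X → ℕ := Function.invFun xseq with hidx
    have hidxeq : ∀ i, idx (xseq i) = i := fun i => Function.leftInverse_invFun hinj i
    set W : X → Set X := fun z => (U ∩ V (nseq (idx z))) \ closure (V (nseq (idx z + 1))) with hW
    have hWx : ∀ i, W (xseq i) = (U ∩ V (nseq i)) \ closure (V (nseq (i + 1))) := by
      intro i; rw [hW]; simp only [hidxeq]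
    have hWmem : ∀ i, xseq i ∈ W (xseq i) := by
      intro i
      rw [hWx]
      exact ⟨⟨hxU' i, hxV' i⟩, hxc i⟩
    have hWopen : ∀ i, IsOpen (W (xseq i)) := by
      intro i
      rw [hWx]
      exact ((hUo.inter (hV _).1).sdiff isClosed_closure)
    set E : Set X := Set.range xseq with hE
    have hEc : E.Countable := countable_range xseq
    have hEinf : E.Infinite := Set.infinite_range_of_injective hinj
    have hWd : E.PairwiseDisjoint W := by
      intro a ha b hb hab
      obtain ⟨i, rfl⟩ := ha
      obtain ⟨j, rfl⟩ := hb
      have hij : i ≠ j := fun h => hab (h ▸ rfl)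
      have key : ∀ i j, i < j → Disjoint (W (xseq i)) (W (xseq j)) := by
        intro i j hij
        rw [hWx i, hWx j]
        apply Set.disjoint_left.mpr
        intro z hz1 hz2
        apply hz1.2
        exact subset_closure (hanti (hmono.monotone hij) hz2.1.2)
      rcases lt_or_gt_of_ne hij with h | h
      · exact key i j h
      · exact (key j i h).symm
    have hSD : StronglyDiscrete E := by
      refine ⟨W, fun d hd => ?_, hWd⟩
      obtain ⟨i, rfl⟩ := hd
      exact ⟨hWopen i, hWmem i⟩
    obtain ⟨z, hz⟩ := hacc E hEc hEinf hSD
    have hzy : z = y := by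
      by_contra hne
      have hzU : ∃ m, z ∉ closure (V m) := by
        by_contra h
        push_neg at h
        have : z ∈ ⋂ n, closure (V n) := mem_iInter.mpr h
        rw [hVi] at this
        exact hne this
      obtain ⟨m, hm⟩ := hzU
      set F : Set X := (xseq '' Set.Iio m) \ {z} with hF
      have hFfin : F.Finite := ((Set.finite_Iio m).image xseq).diff
      have hsub : E \ {z} ⊆ F ∪ closure (V m) := by
        rintro w ⟨⟨i, rfl⟩, hwz⟩
        rcases lt_or_ge i m with h | h
        · exact Or.inl ⟨⟨i, h, rfl⟩, hwz⟩
        · refine Or.inr (subset_closure ?_)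
          exact hanti (le_trans h (hlek i)) (hxV' i)
      have : z ∈ closure (F ∪ closure (V m)) := closure_mono hsub hz
      rw [closure_union, hFfin.isClosed.closure_eq, closure_closure] at this
      rcases this with h | h
      · exact h.2 rfl
      · exact hm h
    subst hzy
    refine ⟨E, hEc, hEinf.nonempty, closure_mono diff_subset hz, W, fun d hd => ?_, hWd⟩
    obtain ⟨i, rfl⟩ := hd
    exact ⟨hWopen i, hWmem i, by rw [hWx]; exact fun w hw => hw.1.1⟩

theorem stmt4 {X : Type*} [TopologicalSpace X] [T2Space X]
    (hacc : ∀ D : Set X, D.Countable → D.Infinite → StronglyDiscrete D →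
      ∃ x, x ∈ closure (D \ {x}))
    {Y : Set X} (hYc : Y.Countable) (hYi : Y.Infinite) (hYf : Fluffy Y)
    (hpsi : ∀ y ∈ Y, ∃ V : ℕ → Set X, (∀ n, IsOpen (V n) ∧ y ∈ V n) ∧
      (∀ n, V (n + 1) ⊆ V n) ∧ ⋂ n, closure (V n) = {y}) :
    ∃ D : Set X, StronglyDiscrete D ∧ Cardinal.mk D = Cardinal.mk Y ∧ Y ⊆ closure D := by
  classical
  obtain ⟨U, hU, hUd⟩ := hYf
  have key : ∀ y : Y, ∃ E : Set X, E.Countable ∧ E.Nonempty ∧ (y : X) ∈ closure E ∧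
      ∃ W : X → Set X, (∀ d ∈ E, IsOpen (W d) ∧ d ∈ W d ∧ W d ⊆ U y) ∧
        E.PairwiseDisjoint W := by
    rintro ⟨y, hy⟩
    obtain ⟨V, hV1, hV2, hV3⟩ := hpsi y hy
    exact lemA hacc (hU y hy).1 (hU y hy).2.2 hV1 hV2 hV3
  choose E hEc hEne hEcl W hW hWd using key
  have hEU : ∀ (y : Y), E y ⊆ U y := by
    intro y d hd
    exact (hW y d hd).2.2 (hW y d hd).2.1
  set D : Set X := ⋃ y : Y, E y with hD
  -- uniqueness of the index
  have huniq : ∀ (y y' : Y) (d : X), d ∈ E y → d ∈ E y' → y = y' := by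
    intro y y' d hd hd'
    by_contra hne
    have hcoe : (y : X) ≠ (y' : X) := fun h => hne (Subtype.ext h)
    exact Set.disjoint_left.mp (hUd y.2 y'.2 hcoe) (hEU y hd) (hEU y' hd')
  set Wg : X → Set X := fun d =>
    if h : ∃ y : Y, d ∈ E y then W h.choose d ∩ U h.choose else ∅ with hWg
  have hWgspec : ∀ (y : Y) (d : X), d ∈ E y → Wg d = W y d ∩ U y := by
    intro y d hd
    have h : ∃ y' : Y, d ∈ E y' := ⟨y, hd⟩
    rw [hWg]
    simp only [dif_pos h]
    rw [huniq h.choose y d h.choose_spec hd]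
  have hSD : StronglyDiscrete D := by
    refine ⟨Wg, fun d hd => ?_, ?_⟩
    · obtain ⟨s, ⟨y, rfl⟩, hds⟩ := hd
      rw [hWgspec y d hds]
      exact ⟨((hW y d hds).1).inter (hU y y.2).1,
        (hW y d hds).2.1, hEU y hds⟩
    · intro a ha b hb hab
      obtain ⟨s, ⟨y, rfl⟩, has⟩ := ha
      obtain ⟨s, ⟨y', rfl⟩, hbs⟩ := hb
      simp only [Function.onFun]
      rw [hWgspec y a has, hWgspec y' b hbs]
      by_cases hyy : y = y'
      · subst hyy
        exact Disjoint.mono inter_subset_left inter_subset_left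
          (hWd y has hbs hab)
      · have hcoe : (y : X) ≠ (y' : X) := fun h => hyy (Subtype.ext h)
        exact Disjoint.mono inter_subset_right inter_subset_right
          (hUd y.2 y'.2 hcoe)
  have : Countable Y := hYc.to_subtype
  have hDc : D.Countable := countable_iUnion hEc
  have hDinf : D.Infinite := by
    have : Infinite Y := hYi.to_subtype
    set e : Y → X := fun y => (hEne y).choose with he
    have hemem : ∀ y : Y, e y ∈ E y := fun y => (hEne y).choose_spec
    have heinj : Function.Injective e := by
      intro y y' h
      exact huniq y y' (e y) (hemem y) (h ▸ hemem y')
    exact Set.infinite_of_injective_forall_mem heinj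
      (fun y => Set.mem_iUnion.mpr ⟨y, hemem y⟩)
  have hmkD : Cardinal.mk D = Cardinal.aleph0 :=
    le_antisymm hDc.le_aleph0 (Cardinal.aleph0_le_mk_iff.mpr hDinf.to_subtype)
  have hmkY : Cardinal.mk Y = Cardinal.aleph0 :=
    le_antisymm hYc.le_aleph0 (Cardinal.aleph0_le_mk_iff.mpr hYi.to_subtype)
  refine ⟨D, hSD, hmkD.trans hmkY.symm, ?_⟩
  intro y hy
  exact closure_mono (Set.subset_iUnion (fun y : Y => E y) ⟨y, hy⟩) (hEcl ⟨y, hy⟩)
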